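/- Fix real constants m > 0, k ≠ 0, M > 0, set Ñ₁ = 1, Ñ₂ = M, Ñ₃ = 1, and fix natural numbers i, h, l. On the open set {I₁,I₂,I₃ > 0} ⊂ ℝ⁶ with coordinates (I₁,I₂,I₃,φ¹,φ²,φ³), define the vector fields Γ'_{ih} = (1/(3+i)) Σ_{j=1}^3 Ñ_j^h I_j^{h+1} (∂/∂I_j + ∂/∂φ^j) and X'_l = mk² I₃^{l−3} ∂/∂φ³. Then the Lie derivative satisfies L_{Γ'_{ih}}(X'_l) = [Γ'_{ih}, X'_l] = −((3 − l)/(3+i)) X'_{l+h}. -/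

import Mathlib

open scoped BigOperators

/-- Phase space with Delaunay-type coordinates `z.1 = (I₁,I₂,I₃)` and
angles `z.2 = (φ¹,φ²,φ³)`. -/
abbrev PhaseSpace := (Fin 3 → ℝ) × (Fin 3 → ℝ)

/-- Lie bracket of vector fields:
`[X,Y](z) = (DY)(z)·X(z) − (DX)(z)·Y(z)`. -/
noncomputable def lieB (X Y : PhaseSpace → PhaseSpace) (z : PhaseSpace) : PhaseSpace :=
  fderiv ℝ Y z (X z) - fderiv ℝ X z (Y z)

/-- The constants `Ñ₁ = 1, Ñ₂ = M, Ñ₃ = 1`. -/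
noncomputable def Ntil (M : ℝ) : Fin 3 → ℝ := ![1, M, 1]

/-- The vector fields `Γ'_{ih} = (1/(3+i)) Σ_j Ñ_j^h I_j^{h+1} (∂/∂I_j + ∂/∂φ^j)`. -/
noncomputable def Gam' (M : ℝ) (i h : ℕ) (z : PhaseSpace) : PhaseSpace :=
  ((fun j => (1 / (3 + (i : ℝ))) * (Ntil M j) ^ h * (z.1 j) ^ (h + 1)),
   (fun j => (1 / (3 + (i : ℝ))) * (Ntil M j) ^ h * (z.1 j) ^ (h + 1)))

/-- The vector fields `X'_l = mk² I₃^{l−3} ∂/∂φ³`. -/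
noncomputable def X' (m k : ℝ) (l : ℕ) (z : PhaseSpace) : PhaseSpace :=
  (0, Pi.single 2 (m * k ^ 2 * (z.1 2) ^ ((l : ℝ) - 3)))

noncomputable def P (j : Fin 3) : PhaseSpace →L[ℝ] ℝ :=
  (ContinuousLinearMap.proj j).comp (ContinuousLinearMap.fst ℝ (Fin 3 → ℝ) (Fin 3 → ℝ))

lemma hP (j : Fin 3) (z : PhaseSpace) : HasFDerivAt (fun w : PhaseSpace => w.1 j) (P j) z :=
  (P j).hasFDerivAt

noncomputable def DX (m k : ℝ) (l : ℕ) (z : PhaseSpace) : PhaseSpace →L[ℝ] PhaseSpace :=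
  (0 : PhaseSpace →L[ℝ] (Fin 3 → ℝ)).prod
    (ContinuousLinearMap.pi (Pi.single 2
      ((m * k ^ 2) • (((( (l:ℝ) - 3) * (z.1 2) ^ ((l:ℝ) - 3 - 1))) • P 2))))

lemma hX (m k : ℝ) (l : ℕ) (z : PhaseSpace) (hz : 0 < z.1 2) :
    HasFDerivAt (X' m k l) (DX m k l z) z := by
  apply HasFDerivAt.prodMk (hasFDerivAt_const _ _)
  rw [hasFDerivAt_pi']
  intro j
  simp only [Pi.single_apply, ContinuousLinearMap.proj_pi]
  by_cases hj : j = 2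
  · subst hj
    simp only [if_pos rfl]
    exact (((hP 2 z).rpow_const (Or.inl hz.ne')).const_mul (m * k ^ 2))
  · simp only [if_neg hj]
    exact hasFDerivAt_const _ _

noncomputable def DG (M : ℝ) (i h : ℕ) (z : PhaseSpace) : PhaseSpace →L[ℝ] PhaseSpace :=
  (ContinuousLinearMap.pi fun j =>
      ((1 / (3 + (i : ℝ))) * (Ntil M j) ^ h) • (((h + 1 : ℕ) * (z.1 j) ^ h) • P j)).prod
  (ContinuousLinearMap.pi fun j =>
      ((1 / (3 + (i : ℝ))) * (Ntil M j) ^ h) • (((h + 1 : ℕ) * (z.1 j) ^ h) • P j))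

lemma hG (M : ℝ) (i h : ℕ) (z : PhaseSpace) :
    HasFDerivAt (Gam' M i h) (DG M i h z) z := by
  have key : HasFDerivAt
      (fun w : PhaseSpace => fun j => (1 / (3 + (i : ℝ))) * (Ntil M j) ^ h * (w.1 j) ^ (h + 1))
      (ContinuousLinearMap.pi fun j =>
        ((1 / (3 + (i : ℝ))) * (Ntil M j) ^ h) • (((h + 1 : ℕ) * (z.1 j) ^ h) • P j)) z := by
    rw [hasFDerivAt_pi]
    intro j
    have hpow := (hasDerivAt_pow (h + 1) (z.1 j)).comp_hasFDerivAt z (hP j z)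
    have := hpow.const_mul ((1 / (3 + (i : ℝ))) * (Ntil M j) ^ h)
    simpa [Function.comp, mul_smul, Nat.add_sub_cancel] using this
  exact key.prodMk key

/-- `L_{Γ'_{ih}}(X'_l) = [Γ'_{ih}, X'_l] = −((3−l)/(3+i)) X'_{l+h}`
on `{I₁,I₂,I₃ > 0}`. -/
theorem stmt18 (m k M : ℝ) (hm : 0 < m) (hk : k ≠ 0) (hM : 0 < M) (i h l : ℕ) :
    ∀ z : PhaseSpace, (∀ j : Fin 3, 0 < z.1 j) →
      lieB (Gam' M i h) (X' m k l) z
        = (-(((3 : ℝ) - (l : ℝ)) / (3 + (i : ℝ)))) • X' m k (l + h) z := by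
  intro z hz
  have hx2 : (0:ℝ) < z.1 2 := hz 2
  rw [lieB, (hX m k l z hx2).fderiv, (hG M i h z).fderiv]
  refine Prod.ext ?_ ?_
  · simp [DX, DG, X', Gam', P, Prod.smul_snd]
    rfl
  · funext j
    simp only [DX, DG, X', Gam', P, ContinuousLinearMap.prod_apply, ContinuousLinearMap.pi_apply,
      ContinuousLinearMap.smul_apply, ContinuousLinearMap.comp_apply,
      ContinuousLinearMap.coe_fst', ContinuousLinearMap.proj_apply, Prod.snd_sub, Pi.sub_apply,
      Prod.smul_snd, Pi.smul_apply, Pi.single_apply, smul_eq_mul, ContinuousLinearMap.zero_apply,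
      Pi.zero_apply]
    by_cases hj : j = 2
    · subst hj
      simp only [if_pos rfl, Ntil, Matrix.cons_val_two, Matrix.tail_cons, Matrix.head_cons,
        one_pow, mul_one]
      have hne : (3 + (i:ℝ)) ≠ 0 := by positivity
      have hpow : (z.1 2) ^ ((l:ℝ) - 3 - 1) * (z.1 2) ^ (h + 1)
          = (z.1 2) ^ ((↑(l + h) : ℝ) - 3) := by
        rw [← Real.rpow_natCast (z.1 2) (h+1), ← Real.rpow_add hx2]
        push_cast
        ring_nf
      simp only [if_true, ContinuousLinearMap.smul_apply, ContinuousLinearMap.comp_apply,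
        ContinuousLinearMap.coe_fst', ContinuousLinearMap.proj_apply, smul_eq_mul,
        Matrix.cons_val_two, Matrix.tail_cons, Matrix.head_cons, one_pow, mul_one]
      linear_combination (m * k ^ 2 * ((l:ℝ) - 3) / (3 + (i:ℝ))) * hpow
    · simp [if_neg hj]
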